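/- For integers n > m ≥ 1, r ≥ 1 and 0 ≤ i ≤ m-1, setting x = 1 - m/n, one has C(n,i) · (1 - x^r)^i · x^{r(n-i)} ≥ ((1-m/n)^{rn}) · (mr)^i / i!. -/

import Mathlib

theorem stmt_12 (n m r i : ℕ) (hm : 1 ≤ m) (hmn : m < n) (hr : 1 ≤ r) (hi : i ≤ m - 1)
    (x : ℝ) (hx : x = 1 - (m : ℝ) / n) :
    (Nat.choose n i : ℝ) * (1 - x ^ r) ^ i * x ^ (r * (n - i))
      ≥ (1 - (m : ℝ) / n) ^ (r * n) * ((m : ℝ) * r) ^ i / (Nat.factorial i) := by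
  have hmn' : (m:ℝ) < n := by exact_mod_cast hmn
  have hm0 : (0:ℝ) < m := by exact_mod_cast hm
  have hn0 : (0:ℝ) < n := hm0.trans hmn'
  have hc0 : (0:ℝ) < (n:ℝ) - m := by linarith
  have hx0 : 0 < x := by
    rw [hx, sub_pos, div_lt_one hn0]; exact hmn'
  have hx1 : x ≤ 1 := by
    have : 0 ≤ (m:ℝ)/n := by positivity
    rw [hx]; linarith
  have hxr1 : x ^ r ≤ 1 := pow_le_one₀ hx0.le hx1
  have hxr0 : 0 < x ^ r := pow_pos hx0 r
  -- key inequality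
  have hkey : x ^ r * ((m:ℝ) * r) ≤ ((n:ℝ) - m) * (1 - x ^ r) := by
    have hy : (-2:ℝ) ≤ (m:ℝ)/((n:ℝ)-m) := by
      have : (0:ℝ) ≤ (m:ℝ)/((n:ℝ)-m) := by positivity
      linarith
    have hpow := one_add_mul_le_pow hy r
    have hinv : (1 + (m:ℝ)/((n:ℝ)-m)) = 1/x := by
      rw [hx]; field_simp; ring
    rw [hinv, div_pow, one_pow] at hpow
    have h2 := mul_le_mul_of_nonneg_left hpow hxr0.le
    rw [mul_one_div_cancel hxr0.ne'] at h2
    have h3 := mul_le_mul_of_nonneg_right h2 hc0.le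
    have : x ^ r * (1 + (r:ℝ) * ((m:ℝ)/((n:ℝ)-m))) * ((n:ℝ)-m)
        = x ^ r * ((n:ℝ)-m) + x ^ r * ((m:ℝ)*r) := by
      field_simp
    rw [this, one_mul] at h3
    nlinarith
  -- descending factorial bound
  have hdesc : ((n:ℝ) - m) ^ i ≤ (Nat.choose n i : ℝ) * (Nat.factorial i) := by
    have h1 : (n - m) ^ i ≤ n.descFactorial i :=
      le_trans (Nat.pow_le_pow_left (by omega : n - m ≤ n + 1 - i) i)
        (Nat.pow_sub_le_descFactorial n i)
    rw [Nat.descFactorial_eq_factorial_mul_choose] at h1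
    have := (Nat.cast_le (α := ℝ)).2 h1
    push_cast at this
    rw [Nat.cast_sub hmn.le] at this
    linarith [this]
  have hfac0 : (0:ℝ) < (Nat.factorial i : ℝ) := by exact_mod_cast i.factorial_pos
  have hxsub : (0:ℝ) ≤ 1 - x ^ r := by linarith
  -- split the exponent
  have hin : i ≤ n := by omega
  have hsplit : x ^ (r * n) = x ^ (r * (n - i)) * x ^ (r * i) := by
    rw [← pow_add, ← Nat.mul_add, Nat.sub_add_cancel hin]
  rw [ge_iff_le, ← hx, hsplit]
  have hmain : x ^ (r * i) * ((m:ℝ) * r) ^ i ≤ (Nat.choose n i : ℝ) * (Nat.factorial i) * (1 - x ^ r) ^ i := by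
    have e1 : x ^ (r * i) * ((m:ℝ) * r) ^ i = (x ^ r * ((m:ℝ) * r)) ^ i := by
      rw [pow_mul, mul_pow, mul_pow]; ring
    rw [e1]
    calc (x ^ r * ((m:ℝ) * r)) ^ i ≤ (((n:ℝ) - m) * (1 - x ^ r)) ^ i := by
          apply pow_le_pow_left₀ (by positivity) hkey
      _ = ((n:ℝ) - m) ^ i * (1 - x ^ r) ^ i := mul_pow _ _ _
      _ ≤ (Nat.choose n i : ℝ) * (Nat.factorial i) * (1 - x ^ r) ^ i := by
          apply mul_le_mul_of_nonneg_right hdesc (by positivity)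
  rw [div_le_iff₀ hfac0]
  have hxni : (0:ℝ) ≤ x ^ (r * (n - i)) := by positivity
  calc x ^ (r * (n - i)) * x ^ (r * i) * ((m:ℝ) * r) ^ i
      = x ^ (r * (n - i)) * (x ^ (r * i) * ((m:ℝ) * r) ^ i) := by ring
    _ ≤ x ^ (r * (n - i)) * ((Nat.choose n i : ℝ) * (Nat.factorial i) * (1 - x ^ r) ^ i) :=
        mul_le_mul_of_nonneg_left hmain hxni
    _ = (Nat.choose n i : ℝ) * (1 - x ^ r) ^ i * x ^ (r * (n - i)) * (Nat.factorial i) := by ring
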